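/- arXiv:1801.10097 — 2 statements merged into one kernel-verified Lean document; each statement's English description precedes it below -/
import Mathlib

section
/- Let S be a finite set, σ a permutation of S, and ω : S → ℝ[[X]] a weight function into formal power series over ℝ such that every ω(s) has zero constant coefficient and ω(σ(s)) = ω(s) for all s ∈ S. Extend σ to finite multisets of S elementwise, and define the weight of a finite multiset M to be the product of ω(s) over the elements of M counted with multiplicity. Then Σ_{M : σ·M = M} ω(M) = exp( Σ_{i≥1} (1/i)·Σ_{s : σ^i(s) = s} ω(s)^i ), where the left-hand sum ranges over all finite multisets of S fixed by σ, both infinite sums converge coefficientwise (for each fixed exponent of X only finitely many terms contribute, since every ω(s) has positive order), and exp denotes the formal exponential applied to a power series with zero constant term. -/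
set_option linter.unusedSectionVars false
set_option linter.unusedVariables false
set_option linter.unusedTactic false

open PowerSeries Finset


/-- The formal exponential of a power series (intended for series with zero
constant coefficient, in which case for each `d` only finitely many `i` give a
nonzero contribution `coeff d (A ^ i) / i!`). -/
noncomputable def formalExp (A : PowerSeries ℝ) : PowerSeries ℝ :=
  PowerSeries.mk fun d => ∑ᶠ i : ℕ, PowerSeries.coeff (R := ℝ) d (A ^ i) / (Nat.factorial i : ℝ)

/-- The weight of a finite multiset: the product of the weights of its elements,
counted with multiplicity. -/
noncomputable def msWeight {S : Type} (ω : S → PowerSeries ℝ) (M : Multiset S) :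
    PowerSeries ℝ :=
  (M.map ω).prod


namespace St8

lemma coeff_eq_of_dvd {n : ℕ} {A B : PowerSeries ℝ}
    (h : (PowerSeries.X : PowerSeries ℝ) ^ n ∣ A - B) {d : ℕ} (hd : d < n) :
    PowerSeries.coeff (R := ℝ) d A = PowerSeries.coeff (R := ℝ) d B := by
  have := PowerSeries.X_pow_dvd_iff.1 h d hd
  rw [map_sub, sub_eq_zero] at this; exact this

lemma dvd_sub_of_coeff_eq {n : ℕ} {A B : PowerSeries ℝ}
    (h : ∀ d < n, PowerSeries.coeff (R := ℝ) d A = PowerSeries.coeff (R := ℝ) d B) :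
    (PowerSeries.X : PowerSeries ℝ) ^ n ∣ A - B :=
  PowerSeries.X_pow_dvd_iff.2 fun m hm => by rw [map_sub, h m hm, sub_self]

lemma dvd_sub_mul {n : ℕ} {A B C D : PowerSeries ℝ}
    (h1 : (PowerSeries.X : PowerSeries ℝ) ^ n ∣ A - B)
    (h2 : (PowerSeries.X : PowerSeries ℝ) ^ n ∣ C - D) :
    (PowerSeries.X : PowerSeries ℝ) ^ n ∣ A * C - B * D := by
  have : A * C - B * D = (A - B) * C + B * (C - D) := by ring
  rw [this]; exact dvd_add (h1.mul_right _) (h2.mul_left _)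

lemma coeff_pow_eq_zero {w : PowerSeries ℝ} (hw : PowerSeries.constantCoeff (R := ℝ) w = 0)
    {d m : ℕ} (hd : d < m) : PowerSeries.coeff (R := ℝ) d (w ^ m) = 0 := by
  have : (PowerSeries.X : PowerSeries ℝ) ^ m ∣ w ^ m :=
    pow_dvd_pow_of_dvd (PowerSeries.X_dvd_iff.2 hw) m
  exact PowerSeries.X_pow_dvd_iff.1 this d hd

lemma derivative_mod {n : ℕ} {A B : PowerSeries ℝ}
    (h : (PowerSeries.X : PowerSeries ℝ) ^ (n + 1) ∣ A - B) :
    (PowerSeries.X : PowerSeries ℝ) ^ n ∣ d⁄dX ℝ A - d⁄dX ℝ B :=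
  dvd_sub_of_coeff_eq fun d hd => by
    rw [PowerSeries.coeff_derivative, PowerSeries.coeff_derivative,
      coeff_eq_of_dvd h (Nat.succ_lt_succ hd)]

lemma coeff_mk_finsupport {f : ℕ → ℝ} {n : ℕ} (h : ∀ i, f i ≠ 0 → i < n) :
    ∑ᶠ i, f i = ∑ i ∈ range n, f i :=
  finsum_eq_sum_of_support_subset f (by intro i hi; simpa using h i hi)


lemma coeff_formalExp {A : PowerSeries ℝ} (hA : PowerSeries.constantCoeff (R := ℝ) A = 0) (d : ℕ) :
    PowerSeries.coeff (R := ℝ) d (formalExp A) =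
      ∑ i ∈ range (d + 1), PowerSeries.coeff (R := ℝ) d (A ^ i) / (Nat.factorial i : ℝ) := by
  rw [formalExp, PowerSeries.coeff_mk]
  refine coeff_mk_finsupport fun i hi => ?_
  by_contra hlt
  exact hi (by rw [coeff_pow_eq_zero hA (by omega), zero_div])

noncomputable def expPoly (A : PowerSeries ℝ) (N : ℕ) : PowerSeries ℝ :=
  ∑ i ∈ range N, PowerSeries.C (R := ℝ) ((Nat.factorial i : ℝ))⁻¹ * A ^ i

lemma formalExp_mod {A : PowerSeries ℝ} (hA : PowerSeries.constantCoeff (R := ℝ) A = 0) (N : ℕ) :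
    (PowerSeries.X : PowerSeries ℝ) ^ N ∣ formalExp A - expPoly A N := by
  refine dvd_sub_of_coeff_eq fun d hd => ?_
  rw [coeff_formalExp hA, expPoly, map_sum]
  calc ∑ i ∈ range (d + 1), PowerSeries.coeff (R := ℝ) d (A ^ i) / (Nat.factorial i : ℝ)
      = ∑ i ∈ range (d + 1),
          PowerSeries.coeff (R := ℝ) d (PowerSeries.C (R := ℝ) ((Nat.factorial i : ℝ))⁻¹ * A ^ i) := by
        refine Finset.sum_congr rfl fun i _ => ?_
        rw [PowerSeries.coeff_C_mul, div_eq_inv_mul]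
    _ = ∑ i ∈ range N,
          PowerSeries.coeff (R := ℝ) d (PowerSeries.C (R := ℝ) ((Nat.factorial i : ℝ))⁻¹ * A ^ i) := by
        refine Finset.sum_subset (Finset.range_subset_range.2 (by omega)) fun i hiN hid => ?_
        rw [PowerSeries.coeff_C_mul, coeff_pow_eq_zero hA (by simp at hid; omega), mul_zero]

lemma constantCoeff_formalExp {A : PowerSeries ℝ} (hA : PowerSeries.constantCoeff (R := ℝ) A = 0) :
    PowerSeries.constantCoeff (R := ℝ) (formalExp A) = 1 := by
  rw [← PowerSeries.coeff_zero_eq_constantCoeff_apply, coeff_formalExp hA]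
  simp

lemma derivative_expPoly (A : PowerSeries ℝ) (N : ℕ) :
    d⁄dX ℝ (expPoly A (N + 1)) = d⁄dX ℝ A * expPoly A N := by
  rw [expPoly, map_sum, Finset.sum_range_succ']
  have h0 : d⁄dX ℝ (PowerSeries.C (R := ℝ) ((Nat.factorial 0 : ℝ))⁻¹ * A ^ 0) = 0 := by
    simp
  rw [h0, add_zero, expPoly, Finset.mul_sum]
  refine Finset.sum_congr rfl fun i _ => ?_
  have hD : d⁄dX ℝ (PowerSeries.C (R := ℝ) ((Nat.factorial (i+1) : ℝ))⁻¹ * A ^ (i+1)) =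
      PowerSeries.C (R := ℝ) ((Nat.factorial (i+1) : ℝ))⁻¹ * (((i+1 : ℕ) : PowerSeries ℝ) *
        (A ^ i * d⁄dX ℝ A)) := by
    rw [Derivation.leibniz, Derivation.leibniz_pow]
    simp only [smul_eq_mul, nsmul_eq_mul, PowerSeries.derivative_C, mul_zero, add_zero,
      Nat.add_sub_cancel]
  rw [hD, ← mul_assoc, ← map_natCast (PowerSeries.C (R := ℝ)) (i+1), ← map_mul]
  have hc : ((Nat.factorial (i+1) : ℝ))⁻¹ * ((i+1 : ℕ) : ℝ) = ((Nat.factorial i : ℝ))⁻¹ := by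
    rw [Nat.factorial_succ]
    push_cast
    have h1 : ((i : ℝ) + 1) ≠ 0 := by positivity
    have h2 : ((Nat.factorial i : ℝ)) ≠ 0 := by
      exact_mod_cast Nat.cast_ne_zero.2 (Nat.factorial_ne_zero i)
    field_simp
  rw [hc]
  ring

lemma derivative_formalExp {A : PowerSeries ℝ} (hA : PowerSeries.constantCoeff (R := ℝ) A = 0) :
    d⁄dX ℝ (formalExp A) = d⁄dX ℝ A * formalExp A := by
  ext d
  have h1 := derivative_mod (A := formalExp A) (B := expPoly A (d + 2)) (formalExp_mod hA (d + 2))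
  have h2 : (PowerSeries.X : PowerSeries ℝ) ^ (d + 1) ∣
      d⁄dX ℝ A * formalExp A - d⁄dX ℝ A * expPoly A (d + 1) := by
    rw [← mul_sub]
    exact Dvd.dvd.mul_left ((pow_dvd_pow _ (by omega)).trans (formalExp_mod hA (d + 1))) _
  rw [coeff_eq_of_dvd h1 (by omega), coeff_eq_of_dvd h2 (by omega), derivative_expPoly]

lemma ode_unique {B F G : PowerSeries ℝ} (hF : d⁄dX ℝ F = B * F) (hG : d⁄dX ℝ G = B * G)
    (h0 : PowerSeries.constantCoeff (R := ℝ) F = PowerSeries.constantCoeff (R := ℝ) G) : F = G := by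
  ext d
  induction d using Nat.strong_induction_on with
  | _ d ih =>
    match d with
    | 0 => simpa [PowerSeries.coeff_zero_eq_constantCoeff] using h0
    | Nat.succ n =>
      have hFc : PowerSeries.coeff (R := ℝ) n (d⁄dX ℝ F) = PowerSeries.coeff (R := ℝ) n (d⁄dX ℝ G) := by
        rw [hF, hG, PowerSeries.coeff_mul, PowerSeries.coeff_mul]
        refine Finset.sum_congr rfl fun p hp => ?_
        rw [ih p.2 (by have := Finset.HasAntidiagonal.mem_antidiagonal.1 hp; omega)]
      rw [PowerSeries.coeff_derivative, PowerSeries.coeff_derivative] at hFc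
      have hne : ((n : ℝ) + 1) ≠ 0 := by positivity
      exact mul_right_cancel₀ hne hFc

/-! ### geometric series and its logarithm -/

noncomputable def geom (w : PowerSeries ℝ) : PowerSeries ℝ :=
  PowerSeries.mk fun d => ∑ᶠ m : ℕ, PowerSeries.coeff (R := ℝ) d (w ^ m)

noncomputable def lgeom (w : PowerSeries ℝ) : PowerSeries ℝ :=
  PowerSeries.mk fun d =>
    ∑ᶠ k ∈ {k : ℕ | 1 ≤ k}, (1 / (k : ℝ)) * PowerSeries.coeff (R := ℝ) d (w ^ k)

lemma coeff_geom {w : PowerSeries ℝ} (hw : PowerSeries.constantCoeff (R := ℝ) w = 0) (d : ℕ) :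
    PowerSeries.coeff (R := ℝ) d (geom w) = ∑ m ∈ range (d + 1), PowerSeries.coeff (R := ℝ) d (w ^ m) := by
  rw [geom, PowerSeries.coeff_mk]
  refine coeff_mk_finsupport fun m hm => ?_
  by_contra hlt
  exact hm (coeff_pow_eq_zero hw (by omega))

lemma coeff_lgeom {w : PowerSeries ℝ} (hw : PowerSeries.constantCoeff (R := ℝ) w = 0) (d : ℕ) :
    PowerSeries.coeff (R := ℝ) d (lgeom w) =
      ∑ k ∈ range (d + 1), (1 / (k : ℝ)) * PowerSeries.coeff (R := ℝ) d (w ^ k) := by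
  rw [lgeom, PowerSeries.coeff_mk]
  refine finsum_mem_eq_sum_of_inter_support_eq _ ?_
  ext k
  simp only [Set.mem_inter_iff, Set.mem_setOf_eq, Function.mem_support, Finset.coe_range,
    Set.mem_Iio]
  constructor
  · rintro ⟨hk, hne⟩
    refine ⟨?_, hne⟩
    by_contra h
    exact hne (by rw [coeff_pow_eq_zero hw (by omega), mul_zero])
  · rintro ⟨hk, hne⟩
    refine ⟨?_, hne⟩
    by_contra h
    have : k = 0 := by omega
    subst this
    simp at hne

lemma geom_mod {w : PowerSeries ℝ} (hw : PowerSeries.constantCoeff (R := ℝ) w = 0) (N : ℕ) :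
    (PowerSeries.X : PowerSeries ℝ) ^ N ∣ geom w - ∑ m ∈ range N, w ^ m := by
  refine dvd_sub_of_coeff_eq fun d hd => ?_
  rw [coeff_geom hw, map_sum]
  exact Finset.sum_subset (Finset.range_subset_range.2 (by omega)) fun m _ hm =>
    coeff_pow_eq_zero hw (by simp at hm; omega)

noncomputable def lgPoly (w : PowerSeries ℝ) (N : ℕ) : PowerSeries ℝ :=
  ∑ k ∈ range N, PowerSeries.C (R := ℝ) (1 / (k : ℝ)) * w ^ k

lemma lgeom_mod {w : PowerSeries ℝ} (hw : PowerSeries.constantCoeff (R := ℝ) w = 0) (N : ℕ) :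
    (PowerSeries.X : PowerSeries ℝ) ^ N ∣ lgeom w - lgPoly w N := by
  refine dvd_sub_of_coeff_eq fun d hd => ?_
  rw [coeff_lgeom hw, lgPoly, map_sum]
  calc ∑ k ∈ range (d + 1), (1 / (k : ℝ)) * PowerSeries.coeff (R := ℝ) d (w ^ k)
      = ∑ k ∈ range (d + 1), PowerSeries.coeff (R := ℝ) d (PowerSeries.C (R := ℝ) (1 / (k : ℝ)) * w ^ k) := by
        refine Finset.sum_congr rfl fun k _ => ?_
        rw [PowerSeries.coeff_C_mul]
    _ = ∑ k ∈ range N, PowerSeries.coeff (R := ℝ) d (PowerSeries.C (R := ℝ) (1 / (k : ℝ)) * w ^ k) := by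
        refine Finset.sum_subset (Finset.range_subset_range.2 (by omega)) fun k _ hk => ?_
        rw [PowerSeries.coeff_C_mul, coeff_pow_eq_zero hw (by simp at hk; omega), mul_zero]

lemma constantCoeff_geom {w : PowerSeries ℝ} (hw : PowerSeries.constantCoeff (R := ℝ) w = 0) :
    PowerSeries.constantCoeff (R := ℝ) (geom w) = 1 := by
  rw [← PowerSeries.coeff_zero_eq_constantCoeff_apply, coeff_geom hw]
  simp

lemma constantCoeff_lgeom {w : PowerSeries ℝ} (hw : PowerSeries.constantCoeff (R := ℝ) w = 0) :
    PowerSeries.constantCoeff (R := ℝ) (lgeom w) = 0 := by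
  rw [← PowerSeries.coeff_zero_eq_constantCoeff_apply, coeff_lgeom hw]
  simp

lemma geom_mul_one_sub {w : PowerSeries ℝ} (hw : PowerSeries.constantCoeff (R := ℝ) w = 0) :
    geom w * (1 - w) = 1 := by
  ext d
  have h1 : (PowerSeries.X : PowerSeries ℝ) ^ (d + 1) ∣
      geom w * (1 - w) - (∑ m ∈ range (d + 1), w ^ m) * (1 - w) :=
    dvd_sub_mul (geom_mod hw (d + 1)) (by rw [sub_self]; exact dvd_zero _)
  rw [coeff_eq_of_dvd h1 (by omega)]
  have hgs : (∑ m ∈ range (d + 1), w ^ m) * (1 - w) = 1 - w ^ (d + 1) := by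
    have := geom_sum_mul w (d + 1)
    have h2 : (∑ m ∈ range (d + 1), w ^ m) * (1 - w) = -((∑ m ∈ range (d + 1), w ^ m) * (w - 1)) := by
      ring
    rw [h2, this]
    ring
  rw [hgs, map_sub, coeff_pow_eq_zero hw (by omega), sub_zero]

lemma one_sub_ne_zero {w : PowerSeries ℝ} (hw : PowerSeries.constantCoeff (R := ℝ) w = 0) :
    (1 - w : PowerSeries ℝ) ≠ 0 := by
  intro h
  have := congrArg (PowerSeries.constantCoeff (R := ℝ)) h
  rw [map_sub, map_one, hw, sub_zero] at this
  simp at this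

lemma derivative_lgPoly (w : PowerSeries ℝ) (N : ℕ) :
    d⁄dX ℝ (lgPoly w (N + 1)) = (∑ j ∈ range N, w ^ j) * d⁄dX ℝ w := by
  rw [lgPoly, map_sum, Finset.sum_range_succ']
  have h0 : d⁄dX ℝ (PowerSeries.C (R := ℝ) (1 / ((0 : ℕ) : ℝ)) * w ^ 0) = 0 := by
    simp
  rw [h0, add_zero, Finset.sum_mul]
  refine Finset.sum_congr rfl fun j _ => ?_
  have hD : d⁄dX ℝ (PowerSeries.C (R := ℝ) (1 / ((j + 1 : ℕ) : ℝ)) * w ^ (j + 1)) =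
      PowerSeries.C (R := ℝ) (1 / ((j + 1 : ℕ) : ℝ)) * (((j + 1 : ℕ) : PowerSeries ℝ) *
        (w ^ j * d⁄dX ℝ w)) := by
    rw [Derivation.leibniz, Derivation.leibniz_pow]
    simp only [smul_eq_mul, nsmul_eq_mul, PowerSeries.derivative_C, mul_zero, add_zero,
      Nat.add_sub_cancel]
  rw [hD, ← mul_assoc, ← map_natCast (PowerSeries.C (R := ℝ)) (j + 1), ← map_mul]
  have hc : 1 / ((j + 1 : ℕ) : ℝ) * ((j + 1 : ℕ) : ℝ) = 1 := by
    have : ((j + 1 : ℕ) : ℝ) ≠ 0 := by positivity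
    field_simp
  rw [hc, map_one, one_mul]

lemma derivative_lgeom_mul {w : PowerSeries ℝ} (hw : PowerSeries.constantCoeff (R := ℝ) w = 0) :
    d⁄dX ℝ (lgeom w) * (1 - w) = d⁄dX ℝ w := by
  ext d
  have h1 : (PowerSeries.X : PowerSeries ℝ) ^ (d + 1) ∣
      d⁄dX ℝ (lgeom w) * (1 - w) - d⁄dX ℝ (lgPoly w (d + 2)) * (1 - w) :=
    dvd_sub_mul (derivative_mod (lgeom_mod hw (d + 2))) (by rw [sub_self]; exact dvd_zero _)
  rw [coeff_eq_of_dvd h1 (by omega), derivative_lgPoly]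
  have hgs : (∑ j ∈ range (d + 1), w ^ j) * d⁄dX ℝ w * (1 - w) =
      (1 - w ^ (d + 1)) * d⁄dX ℝ w := by
    have h2 : (∑ j ∈ range (d + 1), w ^ j) * (1 - w) = 1 - w ^ (d + 1) := by
      have := geom_sum_mul w (d + 1)
      have h3 : (∑ j ∈ range (d + 1), w ^ j) * (1 - w) =
          -((∑ j ∈ range (d + 1), w ^ j) * (w - 1)) := by ring
      rw [h3, this]; ring
    calc (∑ j ∈ range (d + 1), w ^ j) * d⁄dX ℝ w * (1 - w)
        = (∑ j ∈ range (d + 1), w ^ j) * (1 - w) * d⁄dX ℝ w := by ring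
      _ = (1 - w ^ (d + 1)) * d⁄dX ℝ w := by rw [h2]
  rw [hgs, sub_mul, one_mul, map_sub]
  have : PowerSeries.coeff (R := ℝ) d (w ^ (d + 1) * d⁄dX ℝ w) = 0 := by
    have hdvd : (PowerSeries.X : PowerSeries ℝ) ^ (d + 1) ∣ w ^ (d + 1) * d⁄dX ℝ w :=
      Dvd.dvd.mul_right (pow_dvd_pow_of_dvd (PowerSeries.X_dvd_iff.2 hw) _) _
    exact PowerSeries.X_pow_dvd_iff.1 hdvd d (by omega)
  rw [this, sub_zero]

lemma derivative_geom {w : PowerSeries ℝ} (hw : PowerSeries.constantCoeff (R := ℝ) w = 0) :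
    d⁄dX ℝ (geom w) = d⁄dX ℝ (lgeom w) * geom w := by
  have h1 : d⁄dX ℝ (geom w * (1 - w)) = 0 := by rw [geom_mul_one_sub hw]; simp
  rw [Derivation.leibniz] at h1
  have h2 : d⁄dX ℝ (1 - w) = -(d⁄dX ℝ w) := by
    rw [map_sub]; simp
  rw [h2, smul_eq_mul, smul_eq_mul] at h1
  -- h1 : geom w * -(d⁄dX w) + (1 - w) * d⁄dX (geom w) = 0
  have h3 : d⁄dX ℝ (geom w) * (1 - w) = geom w * d⁄dX ℝ w := by
    linear_combination h1
  refine mul_right_cancel₀ (one_sub_ne_zero hw) ?_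
  rw [h3]
  calc geom w * d⁄dX ℝ w = geom w * (d⁄dX ℝ (lgeom w) * (1 - w)) := by
        rw [derivative_lgeom_mul hw]
    _ = d⁄dX ℝ (lgeom w) * geom w * (1 - w) := by ring

/-! ### orbits of a permutation -/

section Orbit

variable {S : Type} [Fintype S] [DecidableEq S] (σ : Equiv.Perm S) (a : S)

noncomputable def orb : Finset S :=
  (range (Function.minimalPeriod (⇑σ) a)).image fun k => (σ ^ k) a

lemma minPeriod_pos : 0 < Function.minimalPeriod (⇑σ) a := by
  have hx : Function.IsPeriodicPt (⇑σ) (orderOf σ) a := by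
    show (⇑σ)^[orderOf σ] a = a
    rw [Equiv.Perm.iterate_eq_pow, pow_orderOf_eq_one]
    rfl
  exact hx.minimalPeriod_pos (orderOf_pos σ)

lemma pow_minPeriod_apply : (σ ^ Function.minimalPeriod (⇑σ) a) a = a := by
  have := Function.iterate_minimalPeriod (f := ⇑σ) (x := a)
  rwa [Equiv.Perm.iterate_eq_pow] at this

lemma mem_orb_iff {x : S} :
    x ∈ orb σ a ↔ ∃ k < Function.minimalPeriod (⇑σ) a, (σ ^ k) a = x := by
  simp [orb, Finset.mem_image, Finset.mem_range]

lemma pow_mem_orb (k : ℕ) : (σ ^ k) a ∈ orb σ a := by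
  have hmod : (σ ^ (k % Function.minimalPeriod (⇑σ) a)) a = (σ ^ k) a := by
    have := Function.iterate_mod_minimalPeriod_eq (f := ⇑σ) (x := a) (n := k)
    rwa [Equiv.Perm.iterate_eq_pow, Equiv.Perm.iterate_eq_pow] at this
  exact (mem_orb_iff σ a).2 ⟨k % Function.minimalPeriod (⇑σ) a,
    Nat.mod_lt _ (minPeriod_pos σ a), hmod⟩

lemma mem_orb_iff' {x : S} : x ∈ orb σ a ↔ ∃ k, (σ ^ k) a = x := by
  constructor
  · rintro h
    obtain ⟨k, _, hk⟩ := (mem_orb_iff σ a).1 h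
    exact ⟨k, hk⟩
  · rintro ⟨k, rfl⟩
    exact pow_mem_orb σ a k

lemma a_mem_orb : a ∈ orb σ a := by
  have := pow_mem_orb σ a 0
  simpa using this

lemma card_orb : (orb σ a).card = Function.minimalPeriod (⇑σ) a := by
  rw [orb, Finset.card_image_of_injOn, card_range]
  intro i hi j hj hij
  exact Function.iterate_injOn_Iio_minimalPeriod (f := ⇑σ) (x := a)
    (by simpa using hi) (by simpa using hj) (by simpa [Equiv.Perm.iterate_eq_pow] using hij)

lemma sigma_mem_orb {x : S} (hx : x ∈ orb σ a) : σ x ∈ orb σ a := by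
  obtain ⟨k, rfl⟩ := (mem_orb_iff' σ a).1 hx
  have : σ ((σ ^ k) a) = (σ ^ (k + 1)) a := by
    rw [pow_succ', Equiv.Perm.mul_apply]
  rw [this]
  exact pow_mem_orb σ a (k + 1)

lemma mem_orb_sigma_iff {x : S} : σ x ∈ orb σ a ↔ x ∈ orb σ a := by
  constructor
  · intro h
    obtain ⟨k, hk⟩ := (mem_orb_iff' σ a).1 h
    match k with
    | 0 =>
      simp only [pow_zero, Equiv.Perm.coe_one, id_eq] at hk
      have h2 : σ ((σ ^ (Function.minimalPeriod (⇑σ) a - 1)) a) = σ x := by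
        rw [← Equiv.Perm.mul_apply, ← pow_succ']
        have hℓ : Function.minimalPeriod (⇑σ) a - 1 + 1 = Function.minimalPeriod (⇑σ) a := by
          have := minPeriod_pos σ a; omega
        rw [hℓ, pow_minPeriod_apply, ← hk]
      have := σ.injective h2
      rw [← this]
      exact pow_mem_orb σ a _
    | Nat.succ k' =>
      have h2 : σ ((σ ^ k') a) = σ x := by
        rw [← Equiv.Perm.mul_apply, ← pow_succ']
        exact hk
      have := σ.injective h2
      rw [← this]
      exact pow_mem_orb σ a k'
  · exact sigma_mem_orb σ a

lemma fix_iff_dvd {x : S} (hx : x ∈ orb σ a) (i : ℕ) :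
    (σ ^ i) x = x ↔ Function.minimalPeriod (⇑σ) a ∣ i := by
  obtain ⟨k, rfl⟩ := (mem_orb_iff' σ a).1 hx
  have hcomm : (σ ^ i) ((σ ^ k) a) = (σ ^ k) ((σ ^ i) a) := by
    rw [← Equiv.Perm.mul_apply, ← Equiv.Perm.mul_apply, pow_mul_comm]
  rw [hcomm, (Equiv.injective (σ ^ k)).eq_iff]
  rw [← Function.isPeriodicPt_iff_minimalPeriod_dvd]
  constructor
  · intro h
    show (⇑σ)^[i] a = a
    rwa [Equiv.Perm.iterate_eq_pow]
  · intro h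
    have : (⇑σ)^[i] a = a := h
    rwa [Equiv.Perm.iterate_eq_pow] at this

lemma omega_const {α : Type*} (ω : S → α) (hωσ : ∀ s, ω (σ s) = ω s) {x : S}
    (hx : x ∈ orb σ a) : ω x = ω a := by
  obtain ⟨k, rfl⟩ := (mem_orb_iff' σ a).1 hx
  clear hx
  induction k with
  | zero => simp
  | succ k ih =>
    have : (σ ^ (k + 1)) a = σ ((σ ^ k) a) := by rw [pow_succ', Equiv.Perm.mul_apply]
    rw [this, hωσ, ih]

lemma image_orb : (orb σ a).image σ = orb σ a := by
  ext y
  simp only [Finset.mem_image]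
  constructor
  · rintro ⟨x, hx, rfl⟩
    exact sigma_mem_orb σ a hx
  · intro hy
    refine ⟨σ.symm y, ?_, σ.apply_symm_apply y⟩
    rw [← mem_orb_sigma_iff σ a, σ.apply_symm_apply]
    exact hy

lemma map_orbVal : (orb σ a).val.map (⇑σ) = (orb σ a).val := by
  have h := Finset.image_val_of_injOn (f := ⇑σ) (s := orb σ a) σ.injective.injOn
  rw [image_orb] at h
  exact h.symm

lemma orb_subset {T : Finset S} (hT : ∀ s ∈ T, σ s ∈ T) (ha : a ∈ T) : orb σ a ⊆ T := by
  intro x hx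
  obtain ⟨k, rfl⟩ := (mem_orb_iff' σ a).1 hx
  induction k with
  | zero => simpa using ha
  | succ k ih =>
    have : (σ ^ (k + 1)) a = σ ((σ ^ k) a) := by rw [pow_succ', Equiv.Perm.mul_apply]
    rw [this]
    exact hT _ (ih (pow_mem_orb σ a k))

end Orbit

/-! ### fixed multisets -/

section Multisets

variable {S : Type} [Fintype S] [DecidableEq S] (σ : Equiv.Perm S)

lemma count_sigma_eq {M : Multiset S} (hM : M.map (⇑σ) = M) (x : S) :
    M.count (σ x) = M.count x := by
  conv_lhs => rw [← hM]
  rw [Multiset.count_map_eq_count' _ _ σ.injective]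

lemma count_orbit_eq (a : S) {M : Multiset S} (hM : M.map (⇑σ) = M) {x : S}
    (hx : x ∈ orb σ a) : M.count x = M.count a := by
  obtain ⟨k, rfl⟩ := (mem_orb_iff' σ a).1 hx
  clear hx
  induction k with
  | zero => simp
  | succ k ih =>
    have h1 : (σ ^ (k + 1)) a = σ ((σ ^ k) a) := by rw [pow_succ', Equiv.Perm.mul_apply]
    rw [h1, count_sigma_eq σ hM, ih]

lemma orb_count_val {a x : S} (hx : x ∈ orb σ a) : (orb σ a).val.count x = 1 :=
  Multiset.count_eq_one_of_mem (orb σ a).nodup hx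

lemma decomp (a : S) {M : Multiset S} (hM : M.map (⇑σ) = M) :
    M = M.count a • (orb σ a).val + M.filter (fun s => s ∉ orb σ a) := by
  ext x
  rw [Multiset.count_add, Multiset.count_nsmul]
  by_cases hx : x ∈ orb σ a
  · rw [Multiset.count_filter_of_neg (by simpa using hx), orb_count_val σ hx,
      count_orbit_eq σ a hM hx]
    ring
  · rw [Multiset.count_filter_of_pos (p := fun s => s ∉ orb σ a) hx]
    have h1 : (orb σ a).val.count x = 0 := by
      rw [Multiset.count_eq_zero]
      exact fun h => hx h
    rw [h1]
    ring

lemma map_filter_not_orb (a : S) {M : Multiset S} (hM : M.map (⇑σ) = M) :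
    (M.filter (fun s => s ∉ orb σ a)).map (⇑σ) = M.filter (fun s => s ∉ orb σ a) := by
  conv_rhs => rw [← hM]
  rw [Multiset.filter_map]
  congr 1
  refine Multiset.filter_congr fun x _ => ?_
  have h := mem_orb_sigma_iff σ a (x := x)
  simp only [Function.comp_apply]
  tauto

lemma recomb_map (a : S) (m : ℕ) {M' : Multiset S} (hM' : M'.map (⇑σ) = M') :
    (m • (orb σ a).val + M').map (⇑σ) = m • (orb σ a).val + M' := by
  rw [Multiset.map_add, Multiset.map_nsmul, map_orbVal, hM']

lemma recomb_count (a : S) (m : ℕ) {M' : Multiset S} (hM' : ∀ s ∈ M', s ∉ orb σ a) :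
    (m • (orb σ a).val + M').count a = m := by
  rw [Multiset.count_add, Multiset.count_nsmul, orb_count_val σ (a_mem_orb σ a)]
  have : M'.count a = 0 := Multiset.count_eq_zero.2 fun h => hM' a h (a_mem_orb σ a)
  rw [this]
  ring

lemma recomb_filter (a : S) (m : ℕ) {M' : Multiset S} (hM' : ∀ s ∈ M', s ∉ orb σ a) :
    (m • (orb σ a).val + M').filter (fun s => s ∉ orb σ a) = M' := by
  rw [Multiset.filter_add]
  have h1 : (m • (orb σ a).val).filter (fun s => s ∉ orb σ a) = 0 := by
    rw [Multiset.filter_eq_nil]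
    intro b hb
    have : b ∈ orb σ a := Multiset.mem_of_mem_nsmul hb
    simp [this]
  have h2 : M'.filter (fun s => s ∉ orb σ a) = M' := Multiset.filter_eq_self.2 hM'
  rw [h1, h2, zero_add]

variable (ω : S → PowerSeries ℝ)

lemma msWeight_add (M N : Multiset S) :
    msWeight ω (M + N) = msWeight ω M * msWeight ω N := by
  simp [msWeight]

lemma msWeight_nsmul (m : ℕ) (M : Multiset S) :
    msWeight ω (m • M) = msWeight ω M ^ m := by
  rw [msWeight, msWeight, Multiset.map_nsmul, Multiset.prod_nsmul]

lemma msWeight_orbVal (a : S) (hωσ : ∀ s, ω (σ s) = ω s) :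
    msWeight ω (orb σ a).val = ω a ^ Function.minimalPeriod (⇑σ) a := by
  rw [msWeight, ← Finset.prod_eq_multiset_prod]
  rw [Finset.prod_congr rfl fun x hx => omega_const σ a ω hωσ hx]
  rw [Finset.prod_const, card_orb]

lemma coeff_msWeight_eq_zero (hω0 : ∀ s, PowerSeries.constantCoeff (R := ℝ) (ω s) = 0)
    {d : ℕ} {M : Multiset S} (hd : d < Multiset.card M) :
    PowerSeries.coeff (R := ℝ) d (msWeight ω M) = 0 := by
  have hdvd : (PowerSeries.X : PowerSeries ℝ) ^ (Multiset.card M) ∣ msWeight ω M := by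
    clear hd
    induction M using Multiset.induction with
    | empty => simp [msWeight]
    | cons a M ih =>
      rw [msWeight, Multiset.map_cons, Multiset.prod_cons, Multiset.card_cons, pow_succ']
      exact mul_dvd_mul (PowerSeries.X_dvd_iff.2 (hω0 a)) ih
  exact PowerSeries.X_pow_dvd_iff.1 hdvd d hd

lemma finite_multisets (d : ℕ) : {M : Multiset S | Multiset.card M ≤ d}.Finite := by
  have h := List.finite_length_le S d
  have hsub : {M : Multiset S | Multiset.card M ≤ d} ⊆
      (fun l : List S => (l : Multiset S)) '' {l | l.length ≤ d} := by
    intro M hM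
    exact ⟨M.toList, by simpa using hM, by simp⟩
  exact (h.image _).subset hsub

end Multisets

/-! ### the two sides, relativized to an invariant set -/

section Main

variable {S : Type} [Fintype S] [DecidableEq S] (σ : Equiv.Perm S) (ω : S → PowerSeries ℝ)

def fixedSet (T : Finset S) : Set (Multiset S) :=
  {M | M.map (⇑σ) = M ∧ ∀ s ∈ M, s ∈ T}

noncomputable def FT (T : Finset S) : PowerSeries ℝ :=
  PowerSeries.mk fun d => ∑ᶠ M ∈ fixedSet σ T, PowerSeries.coeff (R := ℝ) d (msWeight ω M)

noncomputable def LT (T : Finset S) : PowerSeries ℝ :=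
  PowerSeries.mk fun d => ∑ᶠ i ∈ {i : ℕ | 1 ≤ i},
    (1 / (i : ℝ)) *
      PowerSeries.coeff (R := ℝ) d (∑ s ∈ T.filter (fun s => (σ ^ i) s = s), ω s ^ i)

lemma finite_FF (T : Finset S) (d : ℕ) :
    {M : Multiset S | M ∈ fixedSet σ T ∧ Multiset.card M ≤ d}.Finite :=
  (finite_multisets d).subset fun M hM => hM.2

noncomputable def FF (T : Finset S) (d : ℕ) : Finset (Multiset S) :=
  (finite_FF σ T d).toFinset

lemma mem_FF {T : Finset S} {d : ℕ} {M : Multiset S} :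
    M ∈ FF σ T d ↔ M ∈ fixedSet σ T ∧ Multiset.card M ≤ d := by
  rw [FF, Set.Finite.mem_toFinset]
  rfl

lemma coeff_FT (hω0 : ∀ s, PowerSeries.constantCoeff (R := ℝ) (ω s) = 0) (T : Finset S) (d : ℕ) :
    PowerSeries.coeff (R := ℝ) d (FT σ ω T) =
      ∑ M ∈ FF σ T d, PowerSeries.coeff (R := ℝ) d (msWeight ω M) := by
  rw [FT, PowerSeries.coeff_mk]
  refine finsum_mem_eq_sum_of_inter_support_eq _ ?_
  ext M
  simp only [Set.mem_inter_iff, Function.mem_support, Finset.mem_coe, mem_FF σ]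
  constructor
  · rintro ⟨h1, h2⟩
    refine ⟨⟨h1, ?_⟩, h2⟩
    by_contra hcard
    exact h2 (coeff_msWeight_eq_zero ω hω0 (by omega))
  · rintro ⟨⟨h1, _⟩, h2⟩
    exact ⟨h1, h2⟩

lemma coeff_LT (hω0 : ∀ s, PowerSeries.constantCoeff (R := ℝ) (ω s) = 0) (T : Finset S) (d : ℕ) :
    PowerSeries.coeff (R := ℝ) d (LT σ ω T) =
      ∑ i ∈ range (d + 1),
        (1 / (i : ℝ)) *
          PowerSeries.coeff (R := ℝ) d (∑ s ∈ T.filter (fun s => (σ ^ i) s = s), ω s ^ i) := by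
  rw [LT, PowerSeries.coeff_mk]
  refine finsum_mem_eq_sum_of_inter_support_eq _ ?_
  ext i
  simp only [Set.mem_inter_iff, Set.mem_setOf_eq, Function.mem_support, Finset.coe_range,
    Set.mem_Iio]
  constructor
  · rintro ⟨h1, h2⟩
    refine ⟨?_, h2⟩
    by_contra h
    refine h2 ?_
    rw [map_sum]
    rw [Finset.sum_congr rfl fun s _ => coeff_pow_eq_zero (hω0 s) (by omega)]
    simp
  · rintro ⟨h1, h2⟩
    refine ⟨?_, h2⟩
    by_contra h
    have : i = 0 := by omega
    subst this
    simp at h2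

lemma constantCoeff_LT (hω0 : ∀ s, PowerSeries.constantCoeff (R := ℝ) (ω s) = 0) (T : Finset S) :
    PowerSeries.constantCoeff (R := ℝ) (LT σ ω T) = 0 := by
  rw [← PowerSeries.coeff_zero_eq_constantCoeff_apply, LT, PowerSeries.coeff_mk]
  have h : ∀ i ∈ {i : ℕ | 1 ≤ i},
      (1 / (i : ℝ)) *
        PowerSeries.coeff (R := ℝ) 0 (∑ s ∈ T.filter (fun s => (σ ^ i) s = s), ω s ^ i)
        = (0 : ℝ) := by
    intro i hi
    rw [map_sum, Finset.sum_congr rfl fun s _ => coeff_pow_eq_zero (hω0 s) hi]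
    simp
  rw [finsum_mem_congr rfl h, finsum_mem_zero]

lemma FF_zero (T : Finset S) : FF σ T 0 = {0} := by
  ext M
  rw [mem_FF σ, Finset.mem_singleton]
  constructor
  · rintro ⟨_, hcard⟩
    exact Multiset.card_eq_zero.1 (by omega)
  · rintro rfl
    exact ⟨⟨by simp, by simp⟩, by simp⟩

lemma constantCoeff_FT (hω0 : ∀ s, PowerSeries.constantCoeff (R := ℝ) (ω s) = 0) (T : Finset S) :
    PowerSeries.constantCoeff (R := ℝ) (FT σ ω T) = 1 := by
  rw [← PowerSeries.coeff_zero_eq_constantCoeff_apply, coeff_FT σ ω hω0, FF_zero,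
    Finset.sum_singleton]
  simp [msWeight]

lemma FT_empty : FT σ ω ∅ = 1 := by
  ext d
  have hFF : ∀ M ∈ fixedSet σ (∅ : Finset S), M = 0 := by
    rintro M ⟨_, h2⟩
    exact Multiset.eq_zero_of_forall_notMem fun s hs => by simpa using h2 s hs
  have hset : fixedSet σ (∅ : Finset S) = {0} := by
    ext M
    constructor
    · exact fun h => hFF M h
    · rintro rfl
      exact ⟨by simp, by simp⟩
  rw [FT, PowerSeries.coeff_mk, hset, finsum_mem_singleton]
  simp [msWeight]

lemma LT_empty : LT σ ω ∅ = 0 := by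
  ext d
  rw [LT, PowerSeries.coeff_mk]
  have : ∀ i : ℕ, (1 / (i : ℝ)) *
      PowerSeries.coeff (R := ℝ) d (∑ s ∈ (∅ : Finset S).filter (fun s => (σ ^ i) s = s), ω s ^ i)
      = 0 := by
    intro i
    rw [Finset.filter_empty, Finset.sum_empty, map_zero, mul_zero]
  rw [finsum_mem_congr rfl fun i _ => this i, finsum_mem_zero]
  simp

lemma LT_split (hω0 : ∀ s, PowerSeries.constantCoeff (R := ℝ) (ω s) = 0)
    (hωσ : ∀ s, ω (σ s) = ω s) (a : S) (T : Finset S) (haT : a ∈ T)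
    (hT : ∀ s ∈ T, σ s ∈ T) :
    LT σ ω T = lgeom (ω a ^ Function.minimalPeriod (⇑σ) a) + LT σ ω (T \ orb σ a) := by
  set ℓ := Function.minimalPeriod (⇑σ) a with hℓdef
  have hℓpos : 0 < ℓ := minPeriod_pos σ a
  set w := ω a ^ ℓ with hwdef
  have hw : PowerSeries.constantCoeff (R := ℝ) w = 0 := by
    rw [hwdef, map_pow, hω0, zero_pow (by omega)]
  have horbT : orb σ a ⊆ T := orb_subset σ a hT haT
  ext d
  rw [map_add, coeff_LT σ ω hω0, coeff_LT σ ω hω0, coeff_lgeom hw]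
  have hsplit : ∀ i : ℕ,
      PowerSeries.coeff (R := ℝ) d (∑ s ∈ T.filter (fun s => (σ ^ i) s = s), ω s ^ i) =
        PowerSeries.coeff (R := ℝ) d (∑ s ∈ (orb σ a).filter (fun s => (σ ^ i) s = s), ω s ^ i) +
        PowerSeries.coeff (R := ℝ) d
          (∑ s ∈ (T \ orb σ a).filter (fun s => (σ ^ i) s = s), ω s ^ i) := by
    intro i
    rw [← map_add, ← Finset.sum_union
      (Finset.disjoint_filter_filter Finset.disjoint_sdiff), ← Finset.filter_union,
      Finset.union_sdiff_of_subset horbT]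
  have hstep : ∀ i ∈ range (d + 1),
      (1 / (i : ℝ)) *
        PowerSeries.coeff (R := ℝ) d (∑ s ∈ T.filter (fun s => (σ ^ i) s = s), ω s ^ i) =
      (if ℓ ∣ i then (1 / (i : ℝ)) * ((ℓ : ℝ) * PowerSeries.coeff (R := ℝ) d (ω a ^ i)) else 0) +
      (1 / (i : ℝ)) *
        PowerSeries.coeff (R := ℝ) d (∑ s ∈ (T \ orb σ a).filter (fun s => (σ ^ i) s = s), ω s ^ i) := by
    intro i _
    rw [hsplit i, mul_add]
    congr 1
    by_cases hdvd : ℓ ∣ i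
    · rw [Finset.filter_true_of_mem (fun x hx => (fix_iff_dvd σ a hx i).2 hdvd), if_pos hdvd]
      rw [Finset.sum_congr rfl fun x hx => by rw [omega_const σ a ω hωσ hx]]
      rw [Finset.sum_const, card_orb, ← hℓdef]
      rw [map_nsmul, nsmul_eq_mul]
    · rw [Finset.filter_false_of_mem
        (fun x hx hfix => hdvd ((fix_iff_dvd σ a hx i).1 hfix)), if_neg hdvd]
      simp
  rw [Finset.sum_congr rfl hstep, Finset.sum_add_distrib]
  congr 1
  -- now the orbit part: reindex i = ℓ * k
  rw [← Finset.sum_filter]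
  have hrhs : ∑ k ∈ range (d + 1), (1 / (k : ℝ)) * PowerSeries.coeff (R := ℝ) d (w ^ k) =
      ∑ k ∈ (range (d + 1)).filter (fun k => ℓ * k ≤ d),
        (1 / (k : ℝ)) * PowerSeries.coeff (R := ℝ) d (w ^ k) := by
    refine (Finset.sum_filter_of_ne fun k _ hne => ?_).symm
    by_contra hgt
    refine hne ?_
    rw [hwdef, ← pow_mul, coeff_pow_eq_zero (hω0 a) (by omega), mul_zero]
  rw [hrhs]
  refine Finset.sum_nbij' (fun i => i / ℓ) (fun k => ℓ * k) ?_ ?_ ?_ ?_ ?_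
  · intro i hi
    simp only [Finset.mem_filter, Finset.mem_range] at hi ⊢
    obtain ⟨h1, h2⟩ := hi
    have h3 := Nat.mul_div_cancel' h2
    have h4 := Nat.div_le_self i ℓ
    omega
  · intro k hk
    simp only [Finset.mem_filter, Finset.mem_range] at hk ⊢
    exact ⟨by omega, dvd_mul_right ℓ k⟩
  · intro i hi
    simp only [Finset.mem_filter, Finset.mem_range] at hi
    exact Nat.mul_div_cancel' hi.2
  · intro k hk
    exact Nat.mul_div_cancel_left k hℓpos
  · intro i hi
    simp only [Finset.mem_filter, Finset.mem_range] at hi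
    obtain ⟨h1, h2⟩ := hi
    obtain ⟨k, rfl⟩ := h2
    rw [Nat.mul_div_cancel_left k hℓpos]
    match k with
    | 0 => simp
    | Nat.succ k' =>
      rw [hwdef, ← pow_mul]
      have hk0 : ((k' + 1 : ℕ) : ℝ) ≠ 0 := by positivity
      have hl0 : ((ℓ : ℕ) : ℝ) ≠ 0 := by
        have : (0 : ℝ) < (ℓ : ℝ) := by exact_mod_cast hℓpos
        linarith
      have hcast : ((ℓ * (k' + 1) : ℕ) : ℝ) = (ℓ : ℝ) * ((k' + 1 : ℕ) : ℝ) := by push_cast; ring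
      rw [hcast]
      field_simp

lemma FT_split (hω0 : ∀ s, PowerSeries.constantCoeff (R := ℝ) (ω s) = 0)
    (hωσ : ∀ s, ω (σ s) = ω s) (a : S) (T : Finset S) (haT : a ∈ T)
    (hT : ∀ s ∈ T, σ s ∈ T) :
    FT σ ω T = geom (ω a ^ Function.minimalPeriod (⇑σ) a) * FT σ ω (T \ orb σ a) := by
  set ℓ := Function.minimalPeriod (⇑σ) a with hℓdef
  have hℓpos : 0 < ℓ := minPeriod_pos σ a
  set w := ω a ^ ℓ with hwdef
  have hw : PowerSeries.constantCoeff (R := ℝ) w = 0 := by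
    rw [hwdef, map_pow, hω0, zero_pow (by omega)]
  have horbT : orb σ a ⊆ T := orb_subset σ a hT haT
  have hcardO : Multiset.card (orb σ a).val = ℓ := card_orb σ a
  ext d
  rw [coeff_FT σ ω hω0, PowerSeries.coeff_mul]
  have hdecomp : ∀ M ∈ FF σ T d,
      PowerSeries.coeff (R := ℝ) d (msWeight ω M) =
        ∑ p ∈ Finset.HasAntidiagonal.antidiagonal d,
          PowerSeries.coeff (R := ℝ) p.1 (w ^ (M.count a)) *
            PowerSeries.coeff (R := ℝ) p.2 (msWeight ω (M.filter (fun s => s ∉ orb σ a))) := by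
    intro M hM
    obtain ⟨⟨hfix, hsupp⟩, hcard⟩ := (mem_FF σ).1 hM
    conv_lhs => rw [decomp σ a hfix]
    rw [msWeight_add, msWeight_nsmul, msWeight_orbVal σ ω a hωσ, ← hℓdef, ← hwdef,
      PowerSeries.coeff_mul]
  rw [Finset.sum_congr rfl hdecomp, Finset.sum_comm]
  refine Finset.sum_congr rfl fun p hp => ?_
  obtain ⟨x, y⟩ := p
  have hxy : x + y = d := Finset.HasAntidiagonal.mem_antidiagonal.1 hp
  rw [coeff_geom hw, coeff_FT σ ω hω0, Finset.sum_mul_sum, ← Finset.sum_product']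
  -- restrict both sides to the matching cores
  have hL : ∑ M ∈ FF σ T d,
      PowerSeries.coeff (R := ℝ) x (w ^ (M.count a)) *
        PowerSeries.coeff (R := ℝ) y (msWeight ω (M.filter (fun s => s ∉ orb σ a))) =
      ∑ M ∈ (FF σ T d).filter (fun M =>
          ℓ * M.count a ≤ x ∧ Multiset.card (M.filter (fun s => s ∉ orb σ a)) ≤ y),
        PowerSeries.coeff (R := ℝ) x (w ^ (M.count a)) *
          PowerSeries.coeff (R := ℝ) y (msWeight ω (M.filter (fun s => s ∉ orb σ a))) := by
    refine (Finset.sum_filter_of_ne fun M _ hne => ?_).symm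
    constructor
    · by_contra hgt
      refine hne ?_
      rw [hwdef, ← pow_mul, coeff_pow_eq_zero (hω0 a) (by omega), zero_mul]
    · by_contra hgt
      refine hne ?_
      rw [coeff_msWeight_eq_zero ω hω0 (by omega), mul_zero]
  have hR : ∑ q ∈ range (x + 1) ×ˢ FF σ (T \ orb σ a) y,
      PowerSeries.coeff (R := ℝ) x (w ^ q.1) * PowerSeries.coeff (R := ℝ) y (msWeight ω q.2) =
      ∑ q ∈ (range (x + 1) ×ˢ FF σ (T \ orb σ a) y).filter (fun q => ℓ * q.1 ≤ x),
        PowerSeries.coeff (R := ℝ) x (w ^ q.1) * PowerSeries.coeff (R := ℝ) y (msWeight ω q.2) := by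
    refine (Finset.sum_filter_of_ne fun q _ hne => ?_).symm
    by_contra hgt
    refine hne ?_
    rw [hwdef, ← pow_mul, coeff_pow_eq_zero (hω0 a) (by omega), zero_mul]
  rw [hL, hR]
  refine Finset.sum_nbij'
    (fun M => (M.count a, M.filter (fun s => s ∉ orb σ a)))
    (fun q => q.1 • (orb σ a).val + q.2) ?_ ?_ ?_ ?_ ?_
  · intro M hM
    simp only [Finset.mem_filter, Finset.mem_product, Finset.mem_range] at hM ⊢
    obtain ⟨hMF, hc1, hc2⟩ := hM
    obtain ⟨⟨hfix, hsupp⟩, hcard⟩ := (mem_FF σ).1 hMF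
    refine ⟨⟨?_, ?_⟩, hc1⟩
    · have : M.count a ≤ ℓ * M.count a := Nat.le_mul_of_pos_left _ hℓpos
      omega
    · rw [mem_FF σ]
      refine ⟨⟨map_filter_not_orb σ a hfix, ?_⟩, hc2⟩
      intro s hs
      rw [Multiset.mem_filter] at hs
      rw [Finset.mem_sdiff]
      exact ⟨hsupp s hs.1, hs.2⟩
  · intro q hq
    simp only [Finset.mem_filter, Finset.mem_product, Finset.mem_range] at hq
    obtain ⟨⟨hq1, hq2⟩, hq3⟩ := hq
    obtain ⟨⟨hfix', hsupp'⟩, hcard'⟩ := (mem_FF σ).1 hq2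
    have hnotorb : ∀ s ∈ q.2, s ∉ orb σ a := by
      intro s hs
      exact (Finset.mem_sdiff.1 (hsupp' s hs)).2
    simp only [Finset.mem_filter]
    refine ⟨?_, ?_, ?_⟩
    · rw [mem_FF σ]
      refine ⟨⟨recomb_map σ a q.1 hfix', ?_⟩, ?_⟩
      · intro s hs
        rw [Multiset.mem_add] at hs
        rcases hs with hs | hs
        · exact horbT (Multiset.mem_of_mem_nsmul hs)
        · exact (Finset.mem_sdiff.1 (hsupp' s hs)).1
      · rw [Multiset.card_add, Multiset.card_nsmul, hcardO]
        have hcomm : q.1 * ℓ = ℓ * q.1 := Nat.mul_comm _ _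
        omega
    · rw [recomb_count σ a q.1 hnotorb]
      omega
    · rw [recomb_filter σ a q.1 hnotorb]
      omega
  · intro M hM
    simp only [Finset.mem_filter] at hM
    obtain ⟨⟨hfix, _⟩, _⟩ := (mem_FF σ).1 hM.1
    exact (decomp σ a hfix).symm
  · intro q hq
    simp only [Finset.mem_filter, Finset.mem_product, Finset.mem_range] at hq
    obtain ⟨⟨hq1, hq2⟩, hq3⟩ := hq
    obtain ⟨⟨hfix', hsupp'⟩, hcard'⟩ := (mem_FF σ).1 hq2
    have hnotorb : ∀ s ∈ q.2, s ∉ orb σ a := by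
      intro s hs
      exact (Finset.mem_sdiff.1 (hsupp' s hs)).2
    refine Prod.ext ?_ ?_
    · exact recomb_count σ a q.1 hnotorb
    · exact recomb_filter σ a q.1 hnotorb
  · intro M hM
    rfl

lemma main_ode (hω0 : ∀ s, PowerSeries.constantCoeff (R := ℝ) (ω s) = 0)
    (hωσ : ∀ s, ω (σ s) = ω s) :
    ∀ (n : ℕ) (T : Finset S), T.card ≤ n → (∀ s ∈ T, σ s ∈ T) →
      d⁄dX ℝ (FT σ ω T) = d⁄dX ℝ (LT σ ω T) * FT σ ω T := by
  intro n
  induction n with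
  | zero =>
    intro T hcard hT
    have hTe : T = ∅ := Finset.card_eq_zero.1 (by omega)
    subst hTe
    rw [FT_empty, LT_empty]
    simp
  | succ n ih =>
    intro T hcard hT
    by_cases hempty : T = ∅
    · subst hempty
      rw [FT_empty, LT_empty]
      simp
    · obtain ⟨a, ha⟩ := Finset.nonempty_iff_ne_empty.2 hempty
      have horbT : orb σ a ⊆ T := orb_subset σ a hT ha
      have hT' : ∀ s ∈ T \ orb σ a, σ s ∈ T \ orb σ a := by
        intro s hs
        rw [Finset.mem_sdiff] at hs ⊢
        exact ⟨hT s hs.1, fun h => hs.2 ((mem_orb_sigma_iff σ a).1 h)⟩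
      have hcard' : (T \ orb σ a).card ≤ n := by
        rw [Finset.card_sdiff_of_subset horbT]
        have h1 : 0 < (orb σ a).card := by
          rw [card_orb]
          exact minPeriod_pos σ a
        have h2 : (orb σ a).card ≤ T.card := Finset.card_le_card horbT
        omega
      have hIH := ih (T \ orb σ a) hcard' hT'
      have hw : PowerSeries.constantCoeff (R := ℝ) (ω a ^ Function.minimalPeriod (⇑σ) a) = 0 := by
        rw [map_pow, hω0, zero_pow (by have := minPeriod_pos σ a; omega)]
      rw [FT_split σ ω hω0 hωσ a T ha hT, LT_split σ ω hω0 hωσ a T ha hT]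
      rw [map_add, add_mul]
      rw [Derivation.leibniz, smul_eq_mul, smul_eq_mul]
      rw [derivative_geom hw, hIH]
      ring

end Main

end St8


theorem statement8 (S : Type) [Fintype S] (σ : Equiv.Perm S) (ω : S → PowerSeries ℝ)
    (hω0 : ∀ s, PowerSeries.constantCoeff (R := ℝ) (ω s) = 0)
    (hωσ : ∀ s, ω (σ s) = ω s) :
    -- the coefficientwise sum `∑_{M : σ·M = M} ω(M)` (for each fixed degree `d`
    -- only finitely many fixed multisets contribute, since every `ω s` has
    -- positive order) equals `exp (∑_{i ≥ 1} (1/i) ∑_{s : σ^i s = s} ω(s)^i)`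
    (PowerSeries.mk fun d =>
        ∑ᶠ M ∈ {M : Multiset S | M.map σ = M}, PowerSeries.coeff (R := ℝ) d (msWeight ω M)) =
      formalExp (PowerSeries.mk fun d =>
        ∑ᶠ i ∈ {i : ℕ | 1 ≤ i},
          (1 / (i : ℝ)) *
            PowerSeries.coeff (R := ℝ) d (∑ᶠ s ∈ {s : S | (σ ^ i) s = s}, ω s ^ i)) := by
  classical
  have hFT : (PowerSeries.mk fun d =>
      ∑ᶠ M ∈ {M : Multiset S | M.map σ = M}, PowerSeries.coeff (R := ℝ) d (msWeight ω M)) =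
      St8.FT σ ω Finset.univ := by
    rw [St8.FT]
    have hset : St8.fixedSet σ (Finset.univ : Finset S) = {M : Multiset S | M.map ⇑σ = M} := by
      ext M
      simp [St8.fixedSet]
    rw [hset]
  have hinner : ∀ i : ℕ, (∑ᶠ s ∈ {s : S | (σ ^ i) s = s}, ω s ^ i) =
      ∑ s ∈ Finset.univ.filter (fun s => (σ ^ i) s = s), ω s ^ i := by
    intro i
    rw [← finsum_mem_coe_finset]
    congr 1
    ext s
    simp
  have hLT : (PowerSeries.mk fun d =>
      ∑ᶠ i ∈ {i : ℕ | 1 ≤ i},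
        (1 / (i : ℝ)) *
          PowerSeries.coeff (R := ℝ) d (∑ᶠ s ∈ {s : S | (σ ^ i) s = s}, ω s ^ i)) =
      St8.LT σ ω Finset.univ := by
    rw [St8.LT]
    congr 1
    funext d
    refine finsum_mem_congr rfl fun i _ => ?_
    rw [hinner i]
  rw [hFT, hLT]
  refine St8.ode_unique (B := d⁄dX ℝ (St8.LT σ ω Finset.univ))
    (St8.main_ode σ ω hω0 hωσ (Finset.univ.card) Finset.univ le_rfl (by simp)) ?_ ?_
  · exact St8.derivative_formalExp (St8.constantCoeff_LT σ ω hω0 Finset.univ)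
  · rw [St8.constantCoeff_FT σ ω hω0,
      St8.constantCoeff_formalExp (St8.constantCoeff_LT σ ω hω0 Finset.univ)]
end

section
/- Let S be a finite set, σ a permutation of S, and ω : S → ℝ[[X]] a weight function into formal power series over ℝ such that every ω(s) has zero constant coefficient and ω(σ(s)) = ω(s) for all s ∈ S. Let (O_j)_{j∈J} be the orbits of the cyclic group generated by σ acting on S, with representatives s_j ∈ O_j and sizes r_j = |O_j|. Then Σ_{M : σ·M = M} ω(M) = Π_{j∈J} (1 − ω(s_j)^{r_j})^{-1}, where the sum ranges over all finite multisets of S fixed by σ, the sum converges coefficientwise, and each factor is the inverse of a power series with constant coefficient 1. -/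
set_option linter.unusedSectionVars false
set_option maxHeartbeats 1000000


open MulAction PowerSeries

namespace S9

open Finset

lemma coeff_zero_of_X_pow_dvd {c d : ℕ} {W : PowerSeries ℝ}
    (h : (X : PowerSeries ℝ) ^ c ∣ W) (hd : d < c) : PowerSeries.coeff d W = 0 :=
  X_pow_dvd_iff.mp h d hd

lemma coeff_mul_congr_left (A A' B : PowerSeries ℝ) (d : ℕ)
    (h : ∀ u ≤ d, PowerSeries.coeff u A = PowerSeries.coeff u A') :
    PowerSeries.coeff d (A * B) = PowerSeries.coeff d (A' * B) := by
  rw [PowerSeries.coeff_mul, PowerSeries.coeff_mul]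
  refine Finset.sum_congr rfl fun p hp => ?_
  rw [h p.1 (by rw [Finset.HasAntidiagonal.mem_antidiagonal] at hp; omega)]

lemma geom (f : PowerSeries ℝ) (hf : PowerSeries.constantCoeff f = 0) :
    (PowerSeries.mk fun d => ∑ᶠ n : ℕ, PowerSeries.coeff d (f ^ n)) = (1 - f)⁻¹ := by
  have hX : (X : PowerSeries ℝ) ∣ f := X_dvd_iff.mpr hf
  have hpow : ∀ n d : ℕ, d < n → PowerSeries.coeff d (f ^ n) = 0 := fun n d hd =>
    coeff_zero_of_X_pow_dvd (pow_dvd_pow_of_dvd hX n) hd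
  have hcoeff : ∀ u d : ℕ, u ≤ d →
      PowerSeries.coeff u (PowerSeries.mk fun e => ∑ᶠ n : ℕ, PowerSeries.coeff e (f ^ n)) =
        PowerSeries.coeff u (∑ n ∈ range (d + 1), f ^ n) := by
    intro u d hud
    rw [PowerSeries.coeff_mk, map_sum]
    rw [finsum_eq_sum_of_support_subset _ (s := range (d + 1))]
    intro n hn
    simp only [Function.mem_support, Ne] at hn
    simp only [coe_range, Set.mem_Iio]
    by_contra h
    exact hn (hpow n u (by omega))
  rw [PowerSeries.eq_inv_iff_mul_eq_one (by simp [hf])]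
  ext d
  rw [coeff_mul_congr_left _ (∑ n ∈ range (d + 1), f ^ n) _ d (fun u hu => hcoeff u d hu)]
  have hgeo : (∑ n ∈ range (d + 1), f ^ n) * (1 - f) = 1 - f ^ (d + 1) := by
    have h := geom_sum_mul f (d + 1)
    linear_combination -h
  rw [hgeo, map_sub, hpow (d + 1) d (by omega), sub_zero]

lemma mulLemma {ι κ : Type} (A : ι → PowerSeries ℝ) (B : κ → PowerSeries ℝ)
    (s : Set ι) (t : Set κ)
    (hA : ∀ d : ℕ, {i | i ∈ s ∧ ∃ u ≤ d, PowerSeries.coeff u (A i) ≠ 0}.Finite)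
    (hB : ∀ d : ℕ, {j | j ∈ t ∧ ∃ u ≤ d, PowerSeries.coeff u (B j) ≠ 0}.Finite) :
    (PowerSeries.mk fun d => ∑ᶠ p ∈ s ×ˢ t, PowerSeries.coeff d (A p.1 * B p.2)) =
      (PowerSeries.mk fun d => ∑ᶠ i ∈ s, PowerSeries.coeff d (A i)) *
        (PowerSeries.mk fun d => ∑ᶠ j ∈ t, PowerSeries.coeff d (B j)) := by
  ext d
  rw [PowerSeries.coeff_mk, PowerSeries.coeff_mul]
  set SA := (hA d).toFinset with hSA
  set SB := (hB d).toFinset with hSB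
  have hSAs : ↑SA ⊆ s := fun i hi => ((hA d).mem_toFinset.mp hi).1
  have hSBt : ↑SB ⊆ t := fun j hj => ((hB d).mem_toFinset.mp hj).1
  have hAu : ∀ u ≤ d, (∑ᶠ i ∈ s, PowerSeries.coeff u (A i)) =
      ∑ i ∈ SA, PowerSeries.coeff u (A i) := by
    intro u hu
    refine finsum_mem_eq_sum_of_subset _ (fun i hi => ?_) hSAs
    exact (hA d).mem_toFinset.mpr ⟨hi.1, u, hu, hi.2⟩
  have hBu : ∀ u ≤ d, (∑ᶠ j ∈ t, PowerSeries.coeff u (B j)) =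
      ∑ j ∈ SB, PowerSeries.coeff u (B j) := by
    intro u hu
    refine finsum_mem_eq_sum_of_subset _ (fun j hj => ?_) hSBt
    exact (hB d).mem_toFinset.mpr ⟨hj.1, u, hu, hj.2⟩
  have hLHS : (∑ᶠ p ∈ s ×ˢ t, PowerSeries.coeff d (A p.1 * B p.2)) =
      ∑ p ∈ SA ×ˢ SB, PowerSeries.coeff d (A p.1 * B p.2) := by
    refine finsum_mem_eq_sum_of_subset _ (fun p hp => ?_) ?_
    · obtain ⟨⟨hp1, hp2⟩, hne⟩ := hp
      rw [Finset.mem_coe, Finset.mem_product]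
      rw [Function.mem_support, Ne, PowerSeries.coeff_mul] at hne
      have : ∃ q ∈ antidiagonal d,
          PowerSeries.coeff q.1 (A p.1) * PowerSeries.coeff q.2 (B p.2) ≠ 0 := by
        by_contra h
        push_neg at h
        exact hne (Finset.sum_eq_zero h)
      obtain ⟨q, hq, hq0⟩ := this
      rw [Finset.HasAntidiagonal.mem_antidiagonal] at hq
      constructor
      · exact (hA d).mem_toFinset.mpr ⟨hp1, q.1, by omega, fun h => hq0 (by rw [h, zero_mul])⟩
      · exact (hB d).mem_toFinset.mpr ⟨hp2, q.2, by omega, fun h => hq0 (by rw [h, mul_zero])⟩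
    · intro p hp
      rw [Finset.coe_product] at hp
      exact ⟨hSAs hp.1, hSBt hp.2⟩
  rw [hLHS]
  calc ∑ p ∈ SA ×ˢ SB, PowerSeries.coeff d (A p.1 * B p.2)
      = ∑ p ∈ SA ×ˢ SB, ∑ q ∈ antidiagonal d,
          PowerSeries.coeff q.1 (A p.1) * PowerSeries.coeff q.2 (B p.2) := by
        exact Finset.sum_congr rfl fun p _ => PowerSeries.coeff_mul ..
    _ = ∑ q ∈ antidiagonal d, ∑ p ∈ SA ×ˢ SB,
          PowerSeries.coeff q.1 (A p.1) * PowerSeries.coeff q.2 (B p.2) :=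
        Finset.sum_comm
    _ = ∑ q ∈ antidiagonal d, (∑ᶠ i ∈ s, PowerSeries.coeff q.1 (A i)) *
          (∑ᶠ j ∈ t, PowerSeries.coeff q.2 (B j)) := by
        refine Finset.sum_congr rfl fun q hq => ?_
        rw [Finset.HasAntidiagonal.mem_antidiagonal] at hq
        rw [hAu q.1 (by omega), hBu q.2 (by omega), Finset.sum_mul_sum, Finset.sum_product]
  simp only [PowerSeries.coeff_mk]

lemma orbit_invariant {S : Type} {β : Sort*} (σ : Equiv.Perm S) (f : S → β)
    (h : ∀ s, f (σ s) = f s) {s t : S} (ht : t ∈ orbit (Subgroup.zpowers σ) s) : f t = f s := by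
  have hinv : ∀ x, f (σ⁻¹ x) = f x := by
    intro x
    conv_rhs => rw [← Equiv.apply_symm_apply σ x, h]
    rfl
  have key : ∀ k : ℤ, ∀ x : S, f ((σ ^ k) x) = f x := by
    intro k
    induction k using Int.induction_on with
    | zero => simp
    | succ n ih =>
        intro x
        have e : (σ ^ ((n : ℤ) + 1)) x = (σ ^ (n : ℤ)) (σ x) := by
          rw [zpow_add_one, Equiv.Perm.mul_apply]
        rw [e, ih, h]
    | pred n ih =>
        intro x
        have e : (σ ^ (-(n : ℤ) - 1)) x = (σ ^ (-(n : ℤ))) (σ⁻¹ x) := by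
          rw [zpow_sub_one, Equiv.Perm.mul_apply]
        rw [e, ih, hinv]
  obtain ⟨g, hg⟩ := mem_orbit_iff.mp ht
  obtain ⟨k, hk⟩ := g.2
  have hg' : (g : Equiv.Perm S) s = t := hg
  rw [← hg', ← hk, key]

variable {S : Type} [Fintype S]

noncomputable def OMS (σ : Equiv.Perm S) (q : Quotient (orbitRel (Subgroup.zpowers σ) S)) :
    Multiset S :=
  (orbit (Subgroup.zpowers σ) q.out).toFinite.toFinset.val

lemma mem_OMS {σ : Equiv.Perm S} {q} {t : S} :
    t ∈ OMS σ q ↔ t ∈ orbit (Subgroup.zpowers σ) q.out := by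
  rw [OMS, ← Finset.mem_def, Set.Finite.mem_toFinset]

lemma count_OMS_mem [DecidableEq S] {σ : Equiv.Perm S} {q} {t : S}
    (ht : t ∈ orbit (Subgroup.zpowers σ) q.out) : (OMS σ q).count t = 1 :=
  Multiset.count_eq_one_of_mem (Finset.nodup _) (mem_OMS.mpr ht)

lemma count_OMS_not_mem [DecidableEq S] {σ : Equiv.Perm S} {q} {t : S}
    (ht : t ∉ orbit (Subgroup.zpowers σ) q.out) : (OMS σ q).count t = 0 :=
  Multiset.count_eq_zero.mpr (fun h => ht (mem_OMS.mp h))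

lemma card_OMS (σ : Equiv.Perm S) (q) :
    Multiset.card (OMS σ q) = Nat.card (orbit (Subgroup.zpowers σ) q.out) := by
  rw [OMS, Nat.card_coe_set_eq, Set.ncard_eq_toFinset_card _ (Set.toFinite _)]
  rfl

lemma card_orbit_pos (σ : Equiv.Perm S) (q : Quotient (orbitRel (Subgroup.zpowers σ) S)) :
    0 < Nat.card (orbit (Subgroup.zpowers σ) q.out) := by
  have h1 : (orbit (Subgroup.zpowers σ) q.out).Nonempty := ⟨q.out, mem_orbit_self _⟩
  have hfin : (orbit (Subgroup.zpowers σ) q.out).Finite := Set.toFinite _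
  rw [Nat.card_pos_iff]
  exact ⟨h1.to_subtype, hfin⟩

lemma smul_mem_orbit_iff (σ : Equiv.Perm S) (s t : S) :
    σ t ∈ orbit (Subgroup.zpowers σ) s ↔ t ∈ orbit (Subgroup.zpowers σ) s := by
  set g : Subgroup.zpowers σ := ⟨σ, Subgroup.mem_zpowers σ⟩ with hg
  constructor
  · intro h
    obtain ⟨g', hg'⟩ := mem_orbit_iff.mp h
    refine mem_orbit_iff.mpr ⟨g⁻¹ * g', ?_⟩
    rw [mul_smul, hg']
    show σ⁻¹ (σ t) = t
    exact Equiv.symm_apply_apply σ t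
  · intro h
    obtain ⟨g', rfl⟩ := mem_orbit_iff.mp h
    exact mem_orbit_iff.mpr ⟨g * g', by rw [mul_smul]; rfl⟩

lemma mk_eq_iff (σ : Equiv.Perm S) (q : Quotient (orbitRel (Subgroup.zpowers σ) S)) (t : S) :
    Quotient.mk (orbitRel (Subgroup.zpowers σ) S) t = q ↔
      t ∈ orbit (Subgroup.zpowers σ) q.out := by
  conv_lhs => rw [← Quotient.out_eq q]
  rw [Quotient.eq]
  exact orbitRel_apply

lemma fixed_iff_count [DecidableEq S] (σ : Equiv.Perm S) (M : Multiset S) :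
    M.map σ = M ↔ ∀ s, M.count (σ s) = M.count s := by
  constructor
  · intro h s
    conv_lhs => rw [← h]
    exact Multiset.count_map_eq_count' σ M σ.injective s
  · intro h
    ext a
    have : a = σ (σ.symm a) := (Equiv.apply_symm_apply σ a).symm
    rw [this, Multiset.count_map_eq_count' σ M σ.injective, h]

lemma map_OMS (σ : Equiv.Perm S) (q) : (OMS σ q).map σ = OMS σ q := by
  classical
  rw [fixed_iff_count]
  intro s
  by_cases h : s ∈ orbit (Subgroup.zpowers σ) q.out
  · rw [count_OMS_mem h, count_OMS_mem ((smul_mem_orbit_iff σ _ s).mpr h)]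
  · rw [count_OMS_not_mem h, count_OMS_not_mem (fun hh => h ((smul_mem_orbit_iff σ _ s).mp hh))]

lemma msWeight_add (ω : S → PowerSeries ℝ) (A B : Multiset S) :
    msWeight ω (A + B) = msWeight ω A * msWeight ω B := by
  simp [msWeight, Multiset.map_add]

lemma msWeight_nsmul (ω : S → PowerSeries ℝ) (n : ℕ) (A : Multiset S) :
    msWeight ω (n • A) = msWeight ω A ^ n := by
  induction n with
  | zero => simp [msWeight]
  | succ n ih => rw [succ_nsmul, msWeight_add, ih, pow_succ]

lemma msWeight_OMS (σ : Equiv.Perm S) (ω : S → PowerSeries ℝ) (hωσ : ∀ s, ω (σ s) = ω s) (q) :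
    msWeight ω (OMS σ q) = ω q.out ^ Nat.card (orbit (Subgroup.zpowers σ) q.out) := by
  rw [msWeight, ← card_OMS σ q]
  have h1 : ∀ x ∈ (OMS σ q).map ω, x = ω q.out := by
    intro x hx
    obtain ⟨t, ht, rfl⟩ := Multiset.mem_map.mp hx
    exact orbit_invariant σ ω hωσ (mem_OMS.mp ht)
  rw [Multiset.eq_replicate_card.mpr h1, Multiset.prod_replicate, Multiset.card_map]

lemma X_pow_dvd_msWeight (ω : S → PowerSeries ℝ)
    (hω0 : ∀ s, PowerSeries.constantCoeff (ω s) = 0) (M : Multiset S) :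
    (X : PowerSeries ℝ) ^ Multiset.card M ∣ msWeight ω M := by
  induction M using Multiset.induction_on with
  | empty => simp [msWeight]
  | cons a M ih =>
      rw [msWeight, Multiset.map_cons, Multiset.prod_cons, Multiset.card_cons, pow_succ,
        mul_comm ((X : PowerSeries ℝ) ^ Multiset.card M) X]
      exact mul_dvd_mul (X_dvd_iff.mpr (hω0 a)) ih

lemma card_le_finite (d : ℕ) : {M : Multiset S | Multiset.card M ≤ d}.Finite := by
  classical
  apply Set.Finite.subset ((d • (Finset.univ : Finset S).val).powerset.toFinset.finite_toSet)
  intro M hM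
  simp only [Set.mem_setOf_eq] at hM
  simp only [Finset.coe_sort_coe, Multiset.mem_toFinset, Multiset.mem_powerset, Finset.mem_coe]
  rw [Multiset.le_iff_count]
  intro a
  rw [Multiset.count_nsmul]
  calc M.count a ≤ Multiset.card M := Multiset.count_le_card a M
    _ ≤ d := hM
    _ = d * 1 := (mul_one d).symm
    _ ≤ d * Multiset.count a Finset.univ.val := by
        have : Multiset.count a Finset.univ.val = 1 :=
          Multiset.count_eq_one_of_mem Finset.univ.nodup (Finset.mem_univ a)
        rw [this]

def FixSet (σ : Equiv.Perm S) (T : Finset (Quotient (orbitRel (Subgroup.zpowers σ) S))) :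
    Set (Multiset S) :=
  {M | M.map σ = M ∧ ∀ s ∈ M, Quotient.mk (orbitRel (Subgroup.zpowers σ) S) s ∈ T}

lemma count_eq_zero_of_fixset {σ : Equiv.Perm S} {T : Finset _} {a} (ha : a ∉ T)
    {M : Multiset S} (hM : M ∈ FixSet σ T) {t : S}
    (ht : t ∈ orbit (Subgroup.zpowers σ) (Quotient.out a)) [DecidableEq S] :
    M.count t = 0 := by
  rw [Multiset.count_eq_zero]
  intro htM
  exact ha (((mk_eq_iff σ a t).mpr ht) ▸ hM.2 t htM)

lemma bijOn (σ : Equiv.Perm S)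
    [DecidableEq (Quotient (orbitRel (Subgroup.zpowers σ) S))]
    (T : Finset (Quotient (orbitRel (Subgroup.zpowers σ) S)))
    (a : Quotient (orbitRel (Subgroup.zpowers σ) S)) (ha : a ∉ T) :
    Set.BijOn (fun p : ℕ × Multiset S => p.1 • OMS σ a + p.2)
      ((Set.univ : Set ℕ) ×ˢ FixSet σ T) (FixSet σ (insert a T)) := by
  classical
  refine ⟨?_, ?_, ?_⟩
  · -- MapsTo
    rintro ⟨n, M⟩ ⟨-, hM⟩
    constructor
    · rw [fixed_iff_count]
      intro s
      simp only [Multiset.count_add, Multiset.count_nsmul]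
      rw [(fixed_iff_count σ _).mp (map_OMS σ a) s, (fixed_iff_count σ M).mp hM.1 s]
    · intro s hs
      rcases Multiset.mem_add.mp hs with h | h
      · have hsO := mem_OMS.mp (Multiset.mem_of_mem_nsmul h)
        rw [Finset.mem_insert]
        exact Or.inl ((mk_eq_iff σ a s).mpr hsO)
      · exact Finset.mem_insert.mpr (Or.inr (hM.2 s h))
  · -- InjOn
    rintro ⟨n, M⟩ ⟨-, hM⟩ ⟨n', M'⟩ ⟨-, hM'⟩ heq
    simp only at heq
    have hcount : ∀ (m : ℕ) (N : Multiset S), N ∈ FixSet σ T →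
        (m • OMS σ a + N).count (Quotient.out a) = m := by
      intro m N hN
      rw [Multiset.count_add, Multiset.count_nsmul, count_OMS_mem (mem_orbit_self _),
        count_eq_zero_of_fixset ha hN (mem_orbit_self _), mul_one, add_zero]
    have hnn' : n = n' := by
      rw [← hcount n M hM, ← hcount n' M' hM', heq]
    subst hnn'
    have : M = M' := by
      have := heq
      rwa [add_right_inj] at this
    rw [this]
  · -- SurjOn
    rintro M hM
    set n := M.count (Quotient.out a) with hn
    have hfix : ∀ s, M.count (σ s) = M.count s := (fixed_iff_count σ M).mp hM.1
    have hcount : ∀ t ∈ orbit (Subgroup.zpowers σ) (Quotient.out a), M.count t = n :=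
      fun t ht => orbit_invariant σ (fun x => M.count x) hfix ht
    have hle : n • OMS σ a ≤ M := by
      rw [Multiset.le_iff_count]
      intro t
      rw [Multiset.count_nsmul]
      by_cases h : t ∈ orbit (Subgroup.zpowers σ) (Quotient.out a)
      · rw [count_OMS_mem h, mul_one, hcount t h]
      · rw [count_OMS_not_mem h, mul_zero]
        exact Nat.zero_le _
    refine ⟨(n, M - n • OMS σ a), ⟨Set.mem_univ _, ?_, ?_⟩, ?_⟩
    · rw [fixed_iff_count]
      intro s
      rw [Multiset.count_sub, Multiset.count_sub, hfix s, Multiset.count_nsmul,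
        Multiset.count_nsmul, (fixed_iff_count σ _).mp (map_OMS σ a) s]
    · intro s hs
      have hsM : s ∈ M := Multiset.mem_of_le (tsub_le_self) hs
      have h2 := hM.2 s hsM
      rcases Finset.mem_insert.mp h2 with h | h
      · exfalso
        have hsO : s ∈ orbit (Subgroup.zpowers σ) (Quotient.out a) := (mk_eq_iff σ a s).mp h
        have : (M - n • OMS σ a).count s = 0 := by
          rw [Multiset.count_sub, Multiset.count_nsmul, count_OMS_mem hsO, mul_one, hcount s hsO,
            Nat.sub_self]
        rw [← Multiset.count_pos] at hs
        exact absurd this hs.ne'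
      · exact h
    · simp only
      exact add_tsub_cancel_of_le hle

lemma key (σ : Equiv.Perm S) (ω : S → PowerSeries ℝ)
    (hω0 : ∀ s, PowerSeries.constantCoeff (ω s) = 0)
    (hωσ : ∀ s, ω (σ s) = ω s)
    (T : Finset (Quotient (orbitRel (Subgroup.zpowers σ) S))) :
    (PowerSeries.mk fun d =>
        ∑ᶠ M ∈ FixSet σ T, PowerSeries.coeff d (msWeight ω M)) =
      ∏ q ∈ T, (1 - ω q.out ^ Nat.card (orbit (Subgroup.zpowers σ) q.out))⁻¹ := by
  classical
  induction T using Finset.induction_on with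
  | empty =>
      have hset : FixSet σ (∅ : Finset _) = {(0 : Multiset S)} := by
        ext M
        simp only [FixSet, Finset.notMem_empty, Set.mem_setOf_eq, Set.mem_singleton_iff]
        constructor
        · rintro ⟨-, h⟩
          exact Multiset.eq_zero_of_forall_notMem fun s hs => h s hs
        · rintro rfl
          exact ⟨by simp, by simp⟩
      rw [hset, Finset.prod_empty]
      ext d
      rw [PowerSeries.coeff_mk, finsum_mem_singleton]
      simp [msWeight]
  | @insert a T' ha IH =>
      set r := Nat.card (orbit (Subgroup.zpowers σ) (Quotient.out a)) with hr
      set w := ω (Quotient.out a) ^ r with hw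
      have hw0 : PowerSeries.constantCoeff w = 0 := by
        rw [hw, map_pow, hω0, zero_pow (card_orbit_pos σ a).ne']
      have hwX : (X : PowerSeries ℝ) ∣ w := X_dvd_iff.mpr hw0
      have hOMSw : msWeight ω (OMS σ a) = w := msWeight_OMS σ ω hωσ a
      have hA : ∀ d : ℕ, {i : ℕ | i ∈ (Set.univ : Set ℕ) ∧
          ∃ u ≤ d, PowerSeries.coeff u (w ^ i) ≠ 0}.Finite := by
        intro d
        apply Set.Finite.subset (Set.finite_Iic d)
        rintro i ⟨-, u, hud, hu⟩
        rw [Set.mem_Iic]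
        by_contra h
        exact hu (coeff_zero_of_X_pow_dvd (pow_dvd_pow_of_dvd hwX i) (by omega))
      have hB : ∀ d : ℕ, {M : Multiset S | M ∈ FixSet σ T' ∧
          ∃ u ≤ d, PowerSeries.coeff u (msWeight ω M) ≠ 0}.Finite := by
        intro d
        apply Set.Finite.subset (card_le_finite (S := S) d)
        rintro M ⟨-, u, hud, hu⟩
        rw [Set.mem_setOf_eq]
        by_contra h
        exact hu (coeff_zero_of_X_pow_dvd (X_pow_dvd_msWeight ω hω0 M) (by omega))
      have step1 : ∀ d : ℕ,
          (∑ᶠ M ∈ FixSet σ (insert a T'), PowerSeries.coeff d (msWeight ω M)) =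
          ∑ᶠ p ∈ ((Set.univ : Set ℕ) ×ˢ FixSet σ T'),
            PowerSeries.coeff d (w ^ p.1 * msWeight ω p.2) := by
        intro d
        symm
        refine finsum_mem_eq_of_bijOn _ (bijOn σ T' a ha) ?_
        rintro ⟨m, N⟩ -
        simp only
        rw [msWeight_add, msWeight_nsmul, hOMSw]
      have step2 := mulLemma (fun n => w ^ n) (fun M => msWeight ω M)
        (Set.univ : Set ℕ) (FixSet σ T') hA hB
      calc (PowerSeries.mk fun d =>
              ∑ᶠ M ∈ FixSet σ (insert a T'), PowerSeries.coeff d (msWeight ω M))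
          = (PowerSeries.mk fun d => ∑ᶠ p ∈ ((Set.univ : Set ℕ) ×ˢ FixSet σ T'),
              PowerSeries.coeff d (w ^ p.1 * msWeight ω p.2)) := by
            ext d; rw [PowerSeries.coeff_mk, PowerSeries.coeff_mk, step1 d]
        _ = (PowerSeries.mk fun d => ∑ᶠ i ∈ (Set.univ : Set ℕ), PowerSeries.coeff d (w ^ i)) *
              (PowerSeries.mk fun d => ∑ᶠ M ∈ FixSet σ T',
                PowerSeries.coeff d (msWeight ω M)) := step2
        _ = (1 - w)⁻¹ *
              ∏ q ∈ T', (1 - ω q.out ^ Nat.card (orbit (Subgroup.zpowers σ) q.out))⁻¹ := by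
            rw [IH]
            congr 1
            rw [← geom w hw0]
            ext d
            rw [PowerSeries.coeff_mk, PowerSeries.coeff_mk, finsum_mem_univ]
        _ = ∏ q ∈ insert a T',
              (1 - ω q.out ^ Nat.card (orbit (Subgroup.zpowers σ) q.out))⁻¹ := by
            rw [Finset.prod_insert ha]

end S9

theorem statement9 (S : Type) [Fintype S] (σ : Equiv.Perm S) (ω : S → PowerSeries ℝ)
    (hω0 : ∀ s, PowerSeries.constantCoeff (ω s) = 0)
    (hωσ : ∀ s, ω (σ s) = ω s) :
    -- the coefficientwise sum `∑_{M : σ·M = M} ω(M)` equals the product over the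
    -- orbits `O_j` of the cyclic group `⟨σ⟩` (with representative `s_j` and size
    -- `r_j = |O_j|`) of `(1 - ω(s_j)^{r_j})⁻¹`
    (PowerSeries.mk fun d =>
        ∑ᶠ M ∈ {M : Multiset S | M.map σ = M}, PowerSeries.coeff d (msWeight ω M)) =
      ∏ᶠ q : Quotient (orbitRel (Subgroup.zpowers σ) S),
        (1 - ω q.out ^ Nat.card (orbit (Subgroup.zpowers σ) q.out))⁻¹ := by
  classical
  haveI : Fintype (Quotient (orbitRel (Subgroup.zpowers σ) S)) := Fintype.ofFinite _
  rw [finprod_eq_prod_of_fintype]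
  have hset : {M : Multiset S | M.map σ = M} = S9.FixSet σ Finset.univ := by
    ext M
    simp [S9.FixSet]
  rw [hset]
  exact S9.key σ ω hω0 hωσ Finset.univ
end
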